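/- Let S be the unilateral shift on ℓ²(ℕ) (S eᵢ = e_{i+1}), let E be the orthogonal projection onto the closed span of {e_{2i} : i ≥ 1}, and set P = E + (I − E)(S + S*)E. Then P is an idempotent and S − P is invertible in B(ℓ²(ℕ)). In particular, the unilateral shift is a clean element of B(ℓ²(ℕ)). -/

import Mathlib

set_option maxHeartbeats 1000000 in
open ContinuousLinearMap in
/-- Let `S` be the unilateral shift on `ℓ²(ℕ)` (`S eᵢ = e_{i+1}` in 0-based indexing),
let `E` be the orthogonal projection onto the closed span of the second, fourth, ...
basis vectors (odd 0-based indices), and set `P = E + (I - E)(S + S*)E`. Then `P` is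
an idempotent and `S - P` is invertible; in particular the shift is clean. -/
theorem stmt11 (S E : lp (fun _ : ℕ => ℂ) 2 →L[ℂ] lp (fun _ : ℕ => ℂ) 2)
    (hS0 : ∀ x : lp (fun _ : ℕ => ℂ) 2, S x 0 = 0)
    (hS : ∀ (x : lp (fun _ : ℕ => ℂ) 2) (n : ℕ), S x (n + 1) = x n)
    (hE : ∀ (x : lp (fun _ : ℕ => ℂ) 2) (n : ℕ),
      E x n = if Odd n then x n else 0) :
    IsIdempotentElem (E + (1 - E) * (S + adjoint S) * E) ∧
      IsUnit (S - (E + (1 - E) * (S + adjoint S) * E)) := by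
  have hEE : E * E = E := by
    refine ContinuousLinearMap.ext fun x => ?_
    refine lp.ext (funext fun n => ?_)
    simp only [ContinuousLinearMap.mul_apply, hE]
    split_ifs <;> simp_all
  constructor
  · -- idempotence, purely algebraic
    unfold IsIdempotentElem
    have h1 : E * ((1 - E) * (S + adjoint S) * E) = 0 := by
      rw [show E * ((1 - E) * (S + adjoint S) * E)
            = (E * (1-E)) * ((S + adjoint S) * E) by noncomm_ring,
        show E * (1 - E) = E - E * E by noncomm_ring, hEE, sub_self, zero_mul]
    have h2 : ((1 - E) * (S + adjoint S) * E) * E = (1 - E) * (S + adjoint S) * E := by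
      rw [mul_assoc, hEE]
    have h3 : ((1 - E) * (S + adjoint S) * E) * ((1 - E) * (S + adjoint S) * E) = 0 := by
      calc ((1 - E) * (S + adjoint S) * E) * ((1 - E) * (S + adjoint S) * E)
          = ((1 - E) * (S + adjoint S)) * (E * ((1 - E) * (S + adjoint S) * E)) := by
            noncomm_ring
        _ = 0 := by rw [h1, mul_zero]
    calc (E + (1 - E) * (S + adjoint S) * E) * (E + (1 - E) * (S + adjoint S) * E)
        = E * E + E * ((1 - E) * (S + adjoint S) * E)
          + ((1 - E) * (S + adjoint S) * E) * E
          + ((1 - E) * (S + adjoint S) * E) * ((1 - E) * (S + adjoint S) * E) := by noncomm_ring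
      _ = E + (1 - E) * (S + adjoint S) * E := by rw [hEE, h1, h2, h3]; noncomm_ring
  · -- invertibility
    have hS' : ∀ (x : lp (fun _ : ℕ => ℂ) 2) (n : ℕ), adjoint S x n = x (n + 1) := by
      intro x n
      have hsingle : S (lp.single 2 n (1 : ℂ)) = lp.single 2 (n + 1) (1 : ℂ) := by
        refine lp.ext (funext fun j => ?_)
        match j with
        | 0 => rw [hS0]; rw [lp.single_apply]; simp
        | (k+1) =>
          rw [hS, lp.single_apply, lp.single_apply]
          by_cases h : k = n <;> simp [h]
      have h1 : (inner ℂ (adjoint S x) (lp.single 2 n (1 : ℂ)) : ℂ)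
          = inner ℂ x (S (lp.single 2 n (1 : ℂ))) := adjoint_inner_left S (lp.single 2 n (1:ℂ)) x
      rw [hsingle, lp.inner_single_right, lp.inner_single_right] at h1
      simp only [RCLike.inner_apply, mul_one, one_mul] at h1
      exact star_injective h1
    set P := E + (1 - E) * (S + adjoint S) * E with hP
    set V := (1 - E) * (adjoint S - 1) - E * S with hV
    -- coordinate formula for (S - P)
    have hT : ∀ (x : lp (fun _ : ℕ => ℂ) 2) (n : ℕ),
        (S - P) x n = if n = 0 then -x 1 else if Odd n then x (n-1) - x n else -(x (n+1)) := by
      intro x n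
      have hrep : (S - P) x
          = S x - E x - (S (E x) + adjoint S (E x)) + E (S (E x) + adjoint S (E x)) := by
        simp only [hP, ContinuousLinearMap.sub_apply, ContinuousLinearMap.add_apply,
          ContinuousLinearMap.mul_apply, ContinuousLinearMap.one_apply]
        abel
      rw [hrep]
      match n with
      | 0 =>
        have h0 : ¬ Odd 0 := by decide
        have h1 : Odd 1 := by decide
        simp only [lp.coeFn_sub, Pi.sub_apply, lp.coeFn_add, Pi.add_apply,
          hS0, hS', hE, if_pos h1, if_neg h0, if_pos rfl, ite_self]
        ring
      | (k+1) =>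
        have hne : k + 1 ≠ 0 := by omega
        rcases Nat.even_or_odd k with hk | hk
        · have h1 : Odd (k+1) := Even.add_one hk
          have h2 : ¬ Odd k := by simp [Nat.not_odd_iff_even, hk]
          have h3 : ¬ Odd (k+2) := by rw [Nat.odd_iff] at h1 ⊢; omega
          simp only [lp.coeFn_sub, Pi.sub_apply, lp.coeFn_add, Pi.add_apply,
            hS, hS', hE, show k+1+1 = k+2 from rfl,
            if_pos h1, if_neg h2, if_neg h3, if_neg hne, Nat.add_sub_cancel]
          ring
        · have h1 : ¬ Odd (k+1) := by rw [Nat.odd_iff] at hk ⊢; omega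
          have h3 : Odd (k+2) := by rw [Nat.odd_iff] at hk ⊢; omega
          simp only [lp.coeFn_sub, Pi.sub_apply, lp.coeFn_add, Pi.add_apply,
            hS, hS', hE, show k+1+1 = k+2 from rfl,
            if_pos hk, if_neg h1, if_pos h3, if_neg hne]
          ring
    -- coordinate formula for V
    have hVc : ∀ (x : lp (fun _ : ℕ => ℂ) 2) (n : ℕ),
        V x n = if Odd n then -x (n-1) else x (n+1) - x n := by
      intro x n
      have hrep : V x = adjoint S x - x - E (adjoint S x - x) - E (S x) := by
        simp only [hV, ContinuousLinearMap.sub_apply, ContinuousLinearMap.mul_apply,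
          ContinuousLinearMap.one_apply, sub_mul, one_mul]
      rw [hrep]
      rcases Nat.even_or_odd n with hn | hn
      · have h1 : ¬ Odd n := by simp [Nat.not_odd_iff_even, hn]
        simp only [lp.coeFn_sub, Pi.sub_apply, hE, hS', if_neg h1]
        ring
      · obtain ⟨k, rfl⟩ := hn
        have h1 : Odd (2*k+1) := ⟨k, by ring⟩
        simp only [lp.coeFn_sub, Pi.sub_apply, hE, hS', if_pos h1,
          show 2*k+1 = 2*k+1 from rfl, hS x (2*k), Nat.add_sub_cancel]
        ring
    have hTV : (S - P) * V = 1 := by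
      refine ContinuousLinearMap.ext fun x => ?_
      refine lp.ext (funext fun n => ?_)
      rw [ContinuousLinearMap.mul_apply, ContinuousLinearMap.one_apply, hT]
      match n with
      | 0 =>
        rw [if_pos rfl, hVc]
        norm_num
      | (k+1) =>
        have hne : k + 1 ≠ 0 := by omega
        rw [if_neg hne]
        rcases Nat.even_or_odd (k+1) with hn | hn
        · have h1 : ¬ Odd (k+1) := by simp [Nat.not_odd_iff_even, hn]
          rw [if_neg h1, hVc]
          have h2 : Odd (k+1+1) := by rw [Nat.odd_iff] at h1 ⊢; omega
          rw [if_pos h2]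
          simp only [Nat.add_sub_cancel, neg_neg]
        · rw [if_pos hn, hVc, hVc, if_pos hn]
          have h2 : ¬ Odd (k+1-1) := by rw [Nat.odd_iff] at hn ⊢; omega
          rw [if_neg h2]
          simp only [Nat.add_sub_cancel]
          ring
    have hVT : V * (S - P) = 1 := by
      refine ContinuousLinearMap.ext fun x => ?_
      refine lp.ext (funext fun n => ?_)
      rw [ContinuousLinearMap.mul_apply, ContinuousLinearMap.one_apply, hVc]
      rcases Nat.even_or_odd n with hn | hn
      · have h1 : ¬ Odd n := by simp [Nat.not_odd_iff_even, hn]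
        rw [if_neg h1, hT, hT]
        have h2 : n + 1 ≠ 0 := by omega
        have h3 : Odd (n+1) := by rw [Nat.odd_iff] at h1 ⊢; omega
        rw [if_neg h2, if_pos h3]
        simp only [Nat.add_sub_cancel]
        by_cases h0 : n = 0
        · rw [if_pos h0, h0]; ring
        · rw [if_neg h0, if_neg h1]; ring
      · rw [if_pos hn, hT]
        have h2 : ¬ Odd (n-1) := by rw [Nat.odd_iff] at hn ⊢; omega
        by_cases h0 : n - 1 = 0
        · have hn1 : n = 1 := by rw [Nat.odd_iff] at hn; omega
          rw [if_pos h0, hn1]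
          ring
        · rw [if_neg h0, if_neg h2]
          have h3 : n - 1 + 1 = n := by omega
          rw [h3]
          ring
    exact isUnit_iff_exists.mpr ⟨V, hTV, hVT⟩
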